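/- Let G=(V,E) be a finite non-empty simple graph (E ≠ ∅), let φ: V → ℤ assign a positive integer to each vertex, let I be a φ-maximum independent set of G, and write U = V \ I = {u_1, …, u_p}. Suppose that for each k ∈ [1, p−1], the vertex u_k has at most φ(u_k) − 1 neighbors among {u_{k+1}, …, u_p} in the induced subgraph G[U]. Then the bipartite subgraph G[I, U] admits a (φ, U)-well subgraph. -/

import Mathlib

open Finset

def Greedy {p : ℕ} (R : Fin p → Fin p → Prop) (T : Fin p → Prop) : Fin p → Prop
  | k => T k ∧ ∀ j, j < k → Greedy R T j → ¬ R j k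
termination_by k => k.val
decreasing_by exact ‹_ < _›

theorem Greedy_iff {p : ℕ} (R : Fin p → Fin p → Prop) (T : Fin p → Prop) (k : Fin p) :
    Greedy R T k ↔ T k ∧ ∀ j, j < k → Greedy R T j → ¬ R j k := by
  rw [Greedy]

/-- **Main lemma.** Let `G` be a finite non-empty simple graph, `φ` a positive-integer
vertex coloring, `I` a `φ`-maximum independent set (it maximizes `∑_{v ∈ I} φ v` among
independent sets and dominates its complement), and let `U = V \ I` be enumerated as
`u 0, …, u (p-1)`. If each `u k` other than the last has at most `φ (u k) - 1` neighbors
among the later vertices `u j` (`j > k`) of `U`, then the bipartite graph `G[I, U]` has a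
`(φ, U)`-well subgraph.

A `(φ, U)`-well subgraph (a `U`-star-covering in which every center `z ∈ I` has degree at
most `φ z`) is encoded by a function `f` matching each `u ∈ U` to a neighbor `f u ∈ I`,
each `z ∈ I` being used at most `φ z` times. -/
theorem exists_well_subgraph
    {V : Type*} [Fintype V] [DecidableEq V] (G : SimpleGraph V) [DecidableRel G.Adj]
    (hE : G.edgeSet.Nonempty)
    (φ : V → ℤ) (hφ : ∀ v : V, 0 < φ v)
    (I : Finset V)
    (hindep : ∀ a ∈ I, ∀ b ∈ I, ¬ G.Adj a b)
    (hmax : ∀ J : Finset V, (∀ a ∈ J, ∀ b ∈ J, ¬ G.Adj a b) →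
      ∑ v ∈ J, φ v ≤ ∑ v ∈ I, φ v)
    (hdom : ∀ v ∉ I, ∃ w ∈ I, G.Adj v w)
    (p : ℕ) (hp : p = Iᶜ.card)
    (u : Fin p → V) (hu_inj : Function.Injective u) (hu_mem : ∀ k : Fin p, u k ∈ Iᶜ)
    (hnb : ∀ k : Fin p, (k : ℕ) < p - 1 →
      ((Finset.univ.filter fun j : Fin p => k < j ∧ G.Adj (u k) (u j)).card : ℤ)
        ≤ φ (u k) - 1) :
    ∃ f : V → V,
      (∀ v ∈ Iᶜ, f v ∈ I ∧ G.Adj v (f v)) ∧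
      (∀ z ∈ I, ((Iᶜ.filter fun v => f v = z).card : ℤ) ≤ φ z) := by
  classical
  -- u is a bijection onto Iᶜ
  have himg : Finset.image u Finset.univ = Iᶜ := by
    apply Finset.eq_of_subset_of_card_le
    · intro v hv
      obtain ⟨k, -, rfl⟩ := Finset.mem_image.mp hv
      exact hu_mem k
    · rw [Finset.card_image_of_injective _ hu_inj, Finset.card_univ, Fintype.card_fin]
      exact hp.ge
  have hsurj : ∀ v ∈ Iᶜ, ∃ k : Fin p, u k = v := by
    intro v hv
    rw [← himg] at hv
    obtain ⟨k, -, hk⟩ := Finset.mem_image.mp hv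
    exact ⟨k, hk⟩
  -- later-neighbor bound for every index
  have hnb' : ∀ k : Fin p,
      ((Finset.univ.filter fun j : Fin p => k < j ∧ G.Adj (u k) (u j)).card : ℤ)
        ≤ φ (u k) - 1 := by
    intro k
    by_cases hk : (k : ℕ) < p - 1
    · exact hnb k hk
    · have hemp : (Finset.univ.filter fun j : Fin p => k < j ∧ G.Adj (u k) (u j)) = ∅ := by
        apply Finset.filter_eq_empty_iff.mpr
        rintro j - ⟨hlt, -⟩
        have h1 : (k : ℕ) < (j : ℕ) := hlt
        have h2 := j.isLt
        have h3 := k.isLt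
        omega
      rw [hemp]
      have := hφ (u k)
      simp only [Finset.card_empty, Nat.cast_zero]
      omega
  -- Hall-type condition, integer form
  have hall : ∀ S : Finset V, S ⊆ Iᶜ →
      (S.card : ℤ) ≤ ∑ z ∈ S.biUnion (fun v => G.neighborFinset v ∩ I), φ z := by
    intro S hS
    by_contra hcon
    push_neg at hcon
    set NS := S.biUnion (fun v => G.neighborFinset v ∩ I) with hNS
    set T : Finset (Fin p) := Finset.univ.filter (fun k => u k ∈ S) with hTdef
    have hTS : T.image u = S := by
      apply Finset.Subset.antisymm
      · intro v hv
        obtain ⟨k, hk, rfl⟩ := Finset.mem_image.mp hv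
        exact (Finset.mem_filter.mp hk).2
      · intro v hv
        obtain ⟨k, rfl⟩ := hsurj v (hS hv)
        exact Finset.mem_image.mpr ⟨k, Finset.mem_filter.mpr ⟨Finset.mem_univ _, hv⟩, rfl⟩
    have hTcard : T.card = S.card := by
      rw [← hTS, Finset.card_image_of_injective _ hu_inj]
    -- greedy independent subset of T
    set R : Fin p → Fin p → Prop := fun j k => G.Adj (u j) (u k) with hRdef
    set Tp : Fin p → Prop := fun k => k ∈ T with hTpdef
    set T' : Finset (Fin p) := Finset.univ.filter (Greedy R Tp) with hT'def
    have hmemT' : ∀ k, k ∈ T' ↔ Greedy R Tp k := by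
      intro k
      simp [hT'def]
    have hT'sub : T' ⊆ T := by
      intro k hk
      exact ((Greedy_iff R Tp k).mp ((hmemT' k).mp hk)).1
    have hindepT' : ∀ j ∈ T', ∀ k ∈ T', ¬ G.Adj (u j) (u k) := by
      have key : ∀ j k : Fin p, j < k → j ∈ T' → k ∈ T' → ¬ G.Adj (u j) (u k) := by
        intro j k hjk hj hk
        exact ((Greedy_iff R Tp k).mp ((hmemT' k).mp hk)).2 j hjk ((hmemT' j).mp hj)
      intro j hj k hk hadj
      rcases lt_trichotomy j k with h | h | h
      · exact key j k h hj hk hadj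
      · subst h; exact G.loopless.irrefl _ hadj
      · exact key k j h hk hj hadj.symm
    have hexcl : ∀ k ∈ T \ T', ∃ j ∈ T', j < k ∧ G.Adj (u j) (u k) := by
      intro k hk
      obtain ⟨hkT, hkT'⟩ := Finset.mem_sdiff.mp hk
      rw [hmemT', Greedy_iff] at hkT'
      push_neg at hkT'
      obtain ⟨j, hjk, hgj, hadj⟩ := hkT' hkT
      exact ⟨j, (hmemT' j).mpr hgj, hjk, hadj⟩
    have hcount : ((T \ T').card : ℤ) ≤ ∑ j ∈ T', (φ (u j) - 1) := by
      have hsub : T \ T' ⊆ T'.biUnion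
          (fun j => Finset.univ.filter fun k : Fin p => j < k ∧ G.Adj (u j) (u k)) := by
        intro k hk
        obtain ⟨j, hj, hlt, hadj⟩ := hexcl k hk
        exact Finset.mem_biUnion.mpr ⟨j, hj, Finset.mem_filter.mpr ⟨Finset.mem_univ _, hlt, hadj⟩⟩
      calc ((T \ T').card : ℤ)
          ≤ ((T'.biUnion (fun j => Finset.univ.filter
              fun k : Fin p => j < k ∧ G.Adj (u j) (u k))).card : ℤ) := by
            exact_mod_cast Finset.card_le_card hsub
        _ ≤ ((∑ j ∈ T', (Finset.univ.filter
              fun k : Fin p => j < k ∧ G.Adj (u j) (u k)).card : ℕ) : ℤ) := by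
            exact_mod_cast Finset.card_biUnion_le
        _ = ∑ j ∈ T', ((Finset.univ.filter
              fun k : Fin p => j < k ∧ G.Adj (u j) (u k)).card : ℤ) := by push_cast; ring
        _ ≤ ∑ j ∈ T', (φ (u j) - 1) := Finset.sum_le_sum fun j _ => hnb' j
    have hTtot : (T.card : ℤ) ≤ ∑ j ∈ T', φ (u j) := by
      have h1 : (T \ T').card + T'.card = T.card := Finset.card_sdiff_add_card_eq_card hT'sub
      have h2 : ∑ j ∈ T', (φ (u j) - 1) = (∑ j ∈ T', φ (u j)) - T'.card := by
        rw [Finset.sum_sub_distrib]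
        simp
      have h3 : ((T \ T').card : ℤ) + T'.card = T.card := by exact_mod_cast h1
      linarith [hcount]
    set S' : Finset V := T'.image u with hS'def
    have hS'sum : ∑ v ∈ S', φ v = ∑ j ∈ T', φ (u j) :=
      Finset.sum_image (fun a _ b _ h => hu_inj h)
    set N' : Finset V := S'.biUnion (fun v => G.neighborFinset v ∩ I) with hN'def
    have hN'I : N' ⊆ I := by
      intro z hz
      obtain ⟨v, -, hv⟩ := Finset.mem_biUnion.mp hz
      exact (Finset.mem_inter.mp hv).2
    have hS'S : S' ⊆ S := by
      rw [hS'def, ← hTS]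
      exact Finset.image_subset_image hT'sub
    have hN'NS : N' ⊆ NS := Finset.biUnion_subset_biUnion_of_subset_left _ hS'S
    have hS'notI : ∀ v ∈ S', v ∉ I := by
      intro v hv
      obtain ⟨k, -, rfl⟩ := Finset.mem_image.mp hv
      exact Finset.mem_compl.mp (hu_mem k)
    set J : Finset V := (I \ N') ∪ S' with hJdef
    have hJindep : ∀ a ∈ J, ∀ b ∈ J, ¬ G.Adj a b := by
      intro a ha b hb hadj
      rcases Finset.mem_union.mp ha with ha' | ha' <;>
        rcases Finset.mem_union.mp hb with hb' | hb'
      · exact hindep a (Finset.mem_sdiff.mp ha').1 b (Finset.mem_sdiff.mp hb').1 hadj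
      · -- a ∈ I \ N', b ∈ S'
        obtain ⟨haI, haN⟩ := Finset.mem_sdiff.mp ha'
        apply haN
        exact Finset.mem_biUnion.mpr ⟨b, hb',
          Finset.mem_inter.mpr ⟨(SimpleGraph.mem_neighborFinset G b a).mpr hadj.symm, haI⟩⟩
      · obtain ⟨hbI, hbN⟩ := Finset.mem_sdiff.mp hb'
        apply hbN
        exact Finset.mem_biUnion.mpr ⟨a, ha',
          Finset.mem_inter.mpr ⟨(SimpleGraph.mem_neighborFinset G a b).mpr hadj, hbI⟩⟩
      · obtain ⟨j, hj, rfl⟩ := Finset.mem_image.mp ha'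
        obtain ⟨k, hk, rfl⟩ := Finset.mem_image.mp hb'
        exact hindepT' j hj k hk hadj
    have hdisj : Disjoint (I \ N') S' := by
      rw [Finset.disjoint_right]
      intro v hv hv'
      exact hS'notI v hv (Finset.mem_sdiff.mp hv').1
    have hsumJ : ∑ v ∈ J, φ v = (∑ v ∈ I, φ v) - (∑ z ∈ N', φ z) + ∑ v ∈ S', φ v := by
      rw [hJdef, Finset.sum_union hdisj, Finset.sum_sdiff_eq_sub hN'I]
    have hN'le : ∑ z ∈ N', φ z ≤ ∑ z ∈ NS, φ z :=
      Finset.sum_le_sum_of_subset_of_nonneg hN'NS (fun z _ _ => (hφ z).le)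
    have : ∑ v ∈ J, φ v > ∑ v ∈ I, φ v := by
      have hST : (S.card : ℤ) = (T.card : ℤ) := by exact_mod_cast hTcard.symm
      rw [hsumJ, hS'sum]
      linarith [hcon, hTtot, hN'le]
    exact absurd (hmax J hJindep) (not_le.mpr this)
  -- Hall's marriage theorem application
  set t : {x // x ∈ Iᶜ} → Finset (V × ℕ) := fun v =>
    (G.neighborFinset v.1 ∩ I).biUnion
      (fun z => ({z} : Finset V) ×ˢ Finset.range (φ z).toNat) with htdef
  have hallN : ∀ s : Finset {x // x ∈ Iᶜ}, s.card ≤ (s.biUnion t).card := by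
    intro s
    set Sv : Finset V := s.image Subtype.val with hSvdef
    have hSvsub : Sv ⊆ Iᶜ := by
      intro v hv
      obtain ⟨⟨w, hw⟩, -, rfl⟩ := Finset.mem_image.mp hv
      exact hw
    set N : Finset V := Sv.biUnion (fun v => G.neighborFinset v ∩ I) with hNdef
    have hbi : s.biUnion t = N.biUnion
        (fun z => ({z} : Finset V) ×ˢ Finset.range (φ z).toNat) := by
      ext ⟨z, i⟩
      constructor
      · intro h
        obtain ⟨x, hx, hmem⟩ := Finset.mem_biUnion.mp h
        obtain ⟨z', hz', hmem2⟩ := Finset.mem_biUnion.mp hmem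
        obtain ⟨h1, h2⟩ := Finset.mem_product.mp hmem2
        rw [Finset.mem_singleton] at h1
        subst h1
        refine Finset.mem_biUnion.mpr ⟨z, ?_,
          Finset.mem_product.mpr ⟨Finset.mem_singleton_self z, h2⟩⟩
        exact Finset.mem_biUnion.mpr ⟨x.1, Finset.mem_image.mpr ⟨x, hx, rfl⟩, hz'⟩
      · intro h
        obtain ⟨z', hz', hmem2⟩ := Finset.mem_biUnion.mp h
        obtain ⟨h1, h2⟩ := Finset.mem_product.mp hmem2
        rw [Finset.mem_singleton] at h1
        subst h1
        obtain ⟨v, hv, hzv⟩ := Finset.mem_biUnion.mp hz'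
        obtain ⟨x, hx, rfl⟩ := Finset.mem_image.mp hv
        exact Finset.mem_biUnion.mpr ⟨x, hx, Finset.mem_biUnion.mpr
          ⟨z, hzv, Finset.mem_product.mpr ⟨Finset.mem_singleton_self z, h2⟩⟩⟩
    have hcard : (s.biUnion t).card = ∑ z ∈ N, (φ z).toNat := by
      rw [hbi, Finset.card_biUnion]
      · apply Finset.sum_congr rfl
        intro z _
        rw [Finset.card_product, Finset.card_singleton, Finset.card_range, one_mul]
      · intro a _ b _ hab
        rw [Function.onFun, Finset.disjoint_left]
        rintro ⟨z, i⟩ hz hz'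
        obtain ⟨hz1, -⟩ := Finset.mem_product.mp hz
        obtain ⟨hz2, -⟩ := Finset.mem_product.mp hz'
        exact hab ((Finset.mem_singleton.mp hz1) ▸ (Finset.mem_singleton.mp hz2) ▸ rfl)
    have hscard : s.card = Sv.card := by
      rw [hSvdef, Finset.card_image_of_injective _ Subtype.val_injective]
    have hint : (Sv.card : ℤ) ≤ ∑ z ∈ N, φ z := hall Sv hSvsub
    have heq : ∑ z ∈ N, φ z = ((∑ z ∈ N, (φ z).toNat : ℕ) : ℤ) := by
      push_cast
      apply Finset.sum_congr rfl
      intro z hz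
      exact (Int.toNat_of_nonneg (hφ z).le).symm
    rw [hscard, hcard]
    exact_mod_cast heq ▸ hint
  obtain ⟨f, hfinj, hft⟩ := (Finset.all_card_le_biUnion_card_iff_exists_injective t).mp hallN
  have hfprop : ∀ x : {v // v ∈ Iᶜ}, ((f x).1 ∈ I ∧ G.Adj x.1 (f x).1) ∧
      (f x).2 < (φ (f x).1).toNat := by
    intro x
    obtain ⟨z, hz, hmem⟩ := Finset.mem_biUnion.mp (hft x)
    obtain ⟨hadj, hzI⟩ := Finset.mem_inter.mp hz
    obtain ⟨h1, h2⟩ := Finset.mem_product.mp hmem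
    rw [Finset.mem_singleton] at h1
    rw [Finset.mem_range] at h2
    rw [h1]
    exact ⟨⟨hzI, (SimpleGraph.mem_neighborFinset G x.1 z).mp hadj⟩, h2⟩
  refine ⟨fun v => if h : v ∈ Iᶜ then (f ⟨v, h⟩).1 else v, ?_, ?_⟩
  · intro v hv
    beta_reduce
    rw [dif_pos hv]
    exact (hfprop ⟨v, hv⟩).1
  · intro z hz
    have hcard : (Iᶜ.filter fun v =>
        (if h : v ∈ Iᶜ then (f ⟨v, h⟩).1 else v) = z).card ≤ (φ z).toNat := by
      rw [← Finset.card_range (φ z).toNat]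
      apply Finset.card_le_card_of_injOn
        (fun v => if h : v ∈ Iᶜ then (f ⟨v, h⟩).2 else 0)
      · intro v hv
        obtain ⟨hvU, hvz⟩ := Finset.mem_filter.mp hv
        beta_reduce
        rw [dif_pos hvU] at hvz ⊢
        rw [Finset.mem_coe, Finset.mem_range, ← hvz]
        exact (hfprop ⟨v, hvU⟩).2
      · intro v hv w hw hvw
        obtain ⟨hvU, hvz⟩ := Finset.mem_filter.mp hv
        obtain ⟨hwU, hwz⟩ := Finset.mem_filter.mp hw
        rw [dif_pos hvU] at hvz
        rw [dif_pos hwU] at hwz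
        simp only [dif_pos hvU, dif_pos hwU] at hvw
        have : f ⟨v, hvU⟩ = f ⟨w, hwU⟩ := by
          apply Prod.ext
          · rw [hvz, hwz]
          · exact hvw
        have := hfinj this
        exact congrArg Subtype.val this
    calc ((Iᶜ.filter fun v => (if h : v ∈ Iᶜ then (f ⟨v, h⟩).1 else v) = z).card : ℤ)
        ≤ ((φ z).toNat : ℤ) := by exact_mod_cast hcard
      _ = φ z := Int.toNat_of_nonneg (hφ z).le
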